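/- Let q ∈ L^1 be supported in Ω = [-T_-,T_+] with scattering coefficients a(ζ), b(ζ) of the Zakharov–Shabat problem (r = -q*). Then the function ã(ζ) = [a(ζ)-1]e^{-2iζT_+} satisfies |ã(ζ)| ≤ [cosh(κ)-1] e^{2T_+ Im ζ} for Im ζ ≥ 0 and |ã(ζ)| ≤ [cosh(κ)-1] e^{-2T_- Im ζ} for Im ζ < 0, where κ = ‖q‖_{L^1(Ω)}. -/

import Mathlib

section ZSHelpers

open MeasureTheory Set intervalIntegral Finset Filter Nat

/-- `(k+1) x^k ≤ (x+1)^{k+1} - x^{k+1}` for `x ≥ 1` (indeed `x > 0`). -/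
lemma pow_step (k : ℕ) (x : ℝ) (hx : 1 ≤ x) :
    ((k:ℝ)+1) * x ^ k ≤ (x+1) ^ (k+1) - x ^ (k+1) := by
  have hx0 : (0:ℝ) < x := lt_of_lt_of_le one_pos hx
  have hB : 1 + ((k:ℝ)+1) * (1/x) ≤ (1 + 1/x) ^ (k+1) := by
    have h0 : (0:ℝ) ≤ 1/x := by positivity
    have := one_add_mul_le_pow (a := 1/x) (by linarith) (k+1)
    have hcast : ((k+1 : ℕ) : ℝ) = (k:ℝ)+1 := by push_cast; ring
    calc 1 + ((k:ℝ)+1) * (1/x) = 1 + ((k+1:ℕ):ℝ) * (1/x) := by rw [hcast]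
      _ ≤ (1 + 1/x) ^ (k+1) := this
  have hpow : x ^ (k+1) * (1 + 1/x) ^ (k+1) = (x+1)^(k+1) := by
    rw [← mul_pow]; congr 1; field_simp
  have h2 : x ^ (k+1) * (1 + ((k:ℝ)+1) * (1/x)) ≤ (x+1)^(k+1) := by
    rw [← hpow]
    exact mul_le_mul_of_nonneg_left hB (by positivity)
  have h3 : x ^ (k+1) * (1 + ((k:ℝ)+1) * (1/x)) = x^(k+1) + ((k:ℝ)+1) * x^k := by
    field_simp; ring
  nlinarith [h2, h3]

lemma sum_pow_le (k N : ℕ) :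
    (∑ i ∈ Finset.range N, ((i:ℝ)+1) ^ k) * ((k:ℝ)+1) ≤ ((N:ℝ)+1) ^ (k+1) := by
  have key : ∀ i ∈ Finset.range N, ((i:ℝ)+1) ^ k * ((k:ℝ)+1)
      ≤ (((i:ℝ)+1)+1) ^ (k+1) - ((i:ℝ)+1) ^ (k+1) := by
    intro i _
    have := pow_step k ((i:ℝ)+1) (by have := Nat.cast_nonneg (α := ℝ) i; linarith)
    linarith [this]
  calc (∑ i ∈ Finset.range N, ((i:ℝ)+1) ^ k) * ((k:ℝ)+1)
      = ∑ i ∈ Finset.range N, ((i:ℝ)+1) ^ k * ((k:ℝ)+1) := by rw [Finset.sum_mul]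
    _ ≤ ∑ i ∈ Finset.range N, ((((i:ℝ)+1)+1) ^ (k+1) - ((i:ℝ)+1) ^ (k+1)) :=
        Finset.sum_le_sum key
    _ = (((N:ℝ))+1) ^ (k+1) - 1 := by
        have := Finset.sum_range_sub (fun i => ((i:ℝ)+1) ^ (k+1)) N
        simpa using this
    _ ≤ ((N:ℝ)+1) ^ (k+1) := by linarith

/-- Simplex bound: for `g ≥ 0` integrable with primitive `K t = ∫_{a..t} g`,
`∫_{a..b} g K^k ≤ K(b)^{k+1}/(k+1)`. -/
lemma simplex_bound (g : ℝ → ℝ) (hg : Integrable g) (hg0 : ∀ t, 0 ≤ g t)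
    (a b : ℝ) (hab : a ≤ b) (k : ℕ) :
    ∫ s in a..b, g s * (∫ x in a..s, g x) ^ k
      ≤ (∫ x in a..b, g x) ^ (k+1) / ((k:ℝ)+1) := by
  set K : ℝ → ℝ := fun t => ∫ x in a..t, g x with hK
  have hgI : ∀ c d : ℝ, IntervalIntegrable g volume c d := fun c d => hg.intervalIntegrable
  have hKmono : Monotone K := by
    intro x y hxy
    have hadd := integral_add_adjacent_intervals (hgI a x) (hgI x y)
    have hnn : 0 ≤ ∫ s in x..y, g s := integral_nonneg hxy (fun s _ => hg0 s)
    simp only [hK]; linarith [hadd]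
  have hKcont : Continuous K := hg.continuous_primitive a
  have hKa : K a = 0 := integral_same
  have hiint : ∀ (c d : ℝ) (j : ℕ),
      IntervalIntegrable (fun s => g s * K s ^ j) volume c d := fun c d j =>
    (hgI c d).mul_continuousOn ((hKcont.pow j).continuousOn)
  set κ := K b with hκdef
  have hκ0 : 0 ≤ κ := hKa ▸ hKmono hab
  rcases eq_or_lt_of_le hκ0 with hκz | hκpos
  · -- κ = 0 : everything vanishes
    have hKzero : ∀ s ∈ Icc a b, K s = 0 := fun s hs =>
      le_antisymm (hκz ▸ hKmono hs.2) (hKa ▸ hKmono hs.1)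
    rcases k with _ | j
    · simpa [← hκz] using le_refl (0:ℝ)
    · have hz : ∫ s in a..b, g s * K s ^ (j+1) = ∫ s in a..b, (0:ℝ) := by
        apply integral_congr
        intro s hs
        rw [uIcc_of_le hab] at hs
        simp [hKzero s hs]
      rw [hz]
      rw [intervalIntegral.integral_zero]
      exact div_nonneg (pow_nonneg hκ0 _) (by positivity)
  · -- main case κ > 0
    have key : ∀ N : ℕ, 1 ≤ N →
        ∫ s in a..b, g s * K s ^ k ≤ κ ^ (k+1) * (((N:ℝ)+1)/N) ^ (k+1) / ((k:ℝ)+1) := by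
      intro N hN
      have hNpos : (0:ℝ) < N := by exact_mod_cast hN
      -- choose partition points with K (τ i) = i κ / N
      have hex : ∀ i : ℕ, i ≤ N → ∃ t, t ∈ Icc a b ∧ K t = i * κ / N := by
        intro i hi
        have hmem : (i * κ / N : ℝ) ∈ Icc (K a) (K b) := by
          rw [hKa]
          constructor
          · positivity
          · rw [div_le_iff₀ hNpos]
            have : (i:ℝ) ≤ N := by exact_mod_cast hi
            nlinarith
        have := intermediate_value_Icc hab hKcont.continuousOn hmem
        obtain ⟨t, ht, hKt⟩ := this
        exact ⟨t, ht, hKt⟩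
      classical
      set τ : ℕ → ℝ := fun i =>
        if i = 0 then a else if h : i < N then (hex i h.le).choose else b with hτdef
      have hτspec : ∀ i ≤ N, τ i ∈ Icc a b ∧ K (τ i) = i * κ / N := by
        intro i hi
        rcases Nat.eq_zero_or_pos i with rfl | hipos
        · simp [hτdef, hKa, Set.left_mem_Icc, hab]
        rcases lt_or_eq_of_le hi with hilt | rfl
        · have hne : i ≠ 0 := by omega
          have hsp := (hex i hilt.le).choose_spec
          have heq : τ i = (hex i hilt.le).choose := by simp [hτdef, hne, hilt]
          rw [heq]
          exact hsp
        · have hne : i ≠ 0 := by omega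
          have : τ i = b := by simp [hτdef, hne]
          rw [this]
          refine ⟨right_mem_Icc.mpr hab, ?_⟩
          field_simp
          exact hκdef.symm
      have hτle : ∀ i, i < N → τ i ≤ τ (i+1) := by
        intro i hi
        by_contra hlt
        push_neg at hlt
        have h1 := (hτspec i hi.le).2
        have h2 := (hτspec (i+1) hi).2
        have := hKmono hlt.le
        rw [h1, h2] at this
        have : ((i:ℝ)+1) * κ / N ≤ i * κ / N := by push_cast at this ⊢; linarith
        rw [div_le_div_iff_of_pos_right hNpos] at this
        nlinarith
      have hsplit := sum_integral_adjacent_intervals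
        (μ := volume) (a := τ) (n := N) (fun i _ => hiint _ _ k)
      have hτ0 : τ 0 = a := by simp [hτdef]
      have hτN : τ N = b := by
        have hne : N ≠ 0 := by omega
        simp [hτdef, hne]
      rw [hτ0, hτN] at hsplit
      rw [← hsplit]
      -- bound each piece
      have hpiece : ∀ i, i < N →
          ∫ s in τ i..τ (i+1), g s * K s ^ k ≤ (((i:ℝ)+1) * κ / N) ^ k * (κ / N) := by
        intro i hi
        have hτi := hτspec i hi.le
        have hτi1 := hτspec (i+1) hi
        have hle := hτle i hi
        have hmono : ∫ s in τ i..τ (i+1), g s * K s ^ k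
            ≤ ∫ s in τ i..τ (i+1), g s * ((((i:ℝ)+1) * κ / N) ^ k) := by
          apply integral_mono_on hle (hiint _ _ k) ((hgI _ _).mul_const _)
          intro s hs
          have hKs0 : 0 ≤ K s := hKa ▸ hKmono (hτi.1.1.trans hs.1)
          have hKsle : K s ≤ ((i:ℝ)+1) * κ / N := by
            have := hKmono hs.2
            rw [hτi1.2] at this
            push_cast at this ⊢
            linarith
          exact mul_le_mul_of_nonneg_left (pow_le_pow_left₀ hKs0 hKsle k) (hg0 s)
        have hgint : ∫ s in τ i..τ (i+1), g s = κ / N := by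
          have hadd := integral_add_adjacent_intervals (hgI a (τ i)) (hgI (τ i) (τ (i+1)))
          have e1 : (∫ x in a..τ i, g x) = i * κ / N := hτi.2
          have e2 : (∫ x in a..τ (i+1), g x) = ((i:ℝ)+1) * κ / N := by
            have h := hτi1.2
            push_cast at h
            exact h
          have : (∫ s in τ i..τ (i+1), g s) = ((i:ℝ)+1) * κ / N - i * κ / N := by
            rw [← e1, ← e2]; linarith [hadd]
          rw [this]; field_simp; ring
        calc ∫ s in τ i..τ (i+1), g s * K s ^ k
            ≤ ∫ s in τ i..τ (i+1), g s * ((((i:ℝ)+1) * κ / N) ^ k) := hmono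
          _ = (∫ s in τ i..τ (i+1), g s) * ((((i:ℝ)+1) * κ / N) ^ k) := by
              rw [intervalIntegral.integral_mul_const]
          _ = (((i:ℝ)+1) * κ / N) ^ k * (κ / N) := by rw [hgint]; ring
      calc ∑ i ∈ Finset.range N, ∫ s in τ i..τ (i+1), g s * K s ^ k
          ≤ ∑ i ∈ Finset.range N, (((i:ℝ)+1) * κ / N) ^ k * (κ / N) :=
            Finset.sum_le_sum (fun i hi => hpiece i (Finset.mem_range.mp hi))
        _ = (∑ i ∈ Finset.range N, ((i:ℝ)+1) ^ k) * ((κ / N) ^ (k+1)) := by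
            rw [Finset.sum_mul]
            apply Finset.sum_congr rfl
            intro i _
            rw [mul_div_assoc, mul_pow]
            ring
        _ ≤ (((N:ℝ)+1) ^ (k+1) / ((k:ℝ)+1)) * ((κ / N) ^ (k+1)) := by
            apply mul_le_mul_of_nonneg_right _ (by positivity)
            have := sum_pow_le k N
            exact (le_div_iff₀ (by positivity : (0:ℝ) < (k:ℝ)+1)).mpr this
        _ = κ ^ (k+1) * (((N:ℝ)+1)/N) ^ (k+1) / ((k:ℝ)+1) := by
            rw [div_pow, div_pow]
            field_simp
    -- let N → ∞
    have htend : Filter.Tendsto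
        (fun N : ℕ => κ ^ (k+1) * (((N:ℝ)+1)/N) ^ (k+1) / ((k:ℝ)+1))
        Filter.atTop (nhds (κ ^ (k+1) * 1 ^ (k+1) / ((k:ℝ)+1))) := by
      apply Filter.Tendsto.div_const
      apply Filter.Tendsto.const_mul
      apply Filter.Tendsto.pow
      have h1 : Filter.Tendsto (fun N : ℕ => 1 + 1/(N:ℝ)) Filter.atTop (nhds 1) := by
        have := tendsto_one_div_atTop_nhds_zero_nat (𝕜 := ℝ)
        simpa using Filter.Tendsto.const_add 1 this
      apply h1.congr'
      filter_upwards [Filter.eventually_ge_atTop 1] with N hN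
      have hNpos : (0:ℝ) < N := by exact_mod_cast hN
      field_simp
    have hfin : ∫ s in a..b, g s * K s ^ k ≤ κ ^ (k+1) * 1 ^ (k+1) / ((k:ℝ)+1) := by
      refine ge_of_tendsto htend ?_
      filter_upwards [Filter.eventually_ge_atTop 1] with N hN
      exact key N hN
    simpa using hfin

/-- Integration engine: integrating a polynomial-in-`K` bound through `g`. -/
lemma engine (g : ℝ → ℝ) (hg : Integrable g) (hg0 : ∀ t, 0 ≤ g t)
    (a b : ℝ) (w : ℝ → ℝ) (hw : Continuous w)
    (m : ℕ) (c : ℝ) (hc : 0 ≤ c) (e : ℕ → ℕ)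
    (hbound : ∀ s ∈ Icc a b, w s ≤
      (∑ k ∈ Finset.range m, (∫ x in a..s, g x) ^ (e k) / (e k)!)
        + c * (∫ x in a..s, g x) ^ (e m) / (e m)!) :
    ∀ t ∈ Icc a b, (∫ s in a..t, g s * w s)
      ≤ (∑ k ∈ Finset.range m, (∫ x in a..t, g x) ^ (e k + 1) / (e k + 1)!)
        + c * (∫ x in a..t, g x) ^ (e m + 1) / (e m + 1)! := by
  intro t ht
  set K : ℝ → ℝ := fun s => ∫ x in a..s, g x with hKdef
  have hgI : ∀ c' d : ℝ, IntervalIntegrable g volume c' d := fun c' d => hg.intervalIntegrable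
  have hKcont : Continuous K := hg.continuous_primitive a
  have hiint : ∀ (c' d : ℝ) (j : ℕ),
      IntervalIntegrable (fun s => g s * K s ^ j) volume c' d := fun c' d j =>
    (hgI c' d).mul_continuousOn ((hKcont.pow j).continuousOn)
  have hfact : ∀ j : ℕ, ((j + 1)! : ℝ) = ((j:ℝ)+1) * (j)! := by
    intro j; rw [Nat.factorial_succ]; push_cast; ring
  have hfactpos : ∀ j : ℕ, (0:ℝ) < (j)! := fun j => by exact_mod_cast (Nat.factorial_pos j)
  -- the continuous majorant
  set R : ℝ → ℝ := fun s =>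
    (∑ k ∈ Finset.range m, K s ^ (e k) / (e k)!) + c * K s ^ (e m) / (e m)! with hRdef
  have hRcont : Continuous R := by
    apply Continuous.add
    · exact continuous_finset_sum _ (fun k _ => (hKcont.pow (e k)).div_const _)
    · exact ((continuous_const.mul (hKcont.pow (e m))).div_const _)
  have hstep1 : (∫ s in a..t, g s * w s) ≤ ∫ s in a..t, g s * R s := by
    apply integral_mono_on ht.1
      ((hgI a t).mul_continuousOn hw.continuousOn)
      ((hgI a t).mul_continuousOn hRcont.continuousOn)
    intro s hs
    have hs' : s ∈ Icc a b := ⟨hs.1, hs.2.trans ht.2⟩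
    exact mul_le_mul_of_nonneg_left (hbound s hs') (hg0 s)
  have hfun : (fun s => g s * R s)
      = fun s => (∑ k ∈ Finset.range m, (g s * K s ^ (e k)) / (e k)!)
        + (c / (e m)!) * (g s * K s ^ (e m)) := by
    funext s
    rw [hRdef]
    simp only
    rw [mul_add, Finset.mul_sum]
    congr 1
    · exact Finset.sum_congr rfl (fun k _ => by ring)
    · ring
  have hsplit : (∫ s in a..t, g s * R s)
      = (∑ k ∈ Finset.range m, (∫ s in a..t, g s * K s ^ (e k)) / (e k)!)
        + (c / (e m)!) * (∫ s in a..t, g s * K s ^ (e m)) := by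
    have hsumint : IntervalIntegrable
        (fun s => ∑ k ∈ Finset.range m, (g s * K s ^ (e k)) / ((e k)! : ℝ)) volume a t := by
      have := IntervalIntegrable.sum (μ := volume) (a := a) (b := t) (Finset.range m)
        (f := fun k => fun s => (g s * K s ^ (e k)) / ((e k)! : ℝ))
        (fun k _ => (hiint a t (e k)).div_const _)
      have h2 : (∑ k ∈ Finset.range m, fun s => (g s * K s ^ (e k)) / ((e k)! : ℝ))
          = (fun s => ∑ k ∈ Finset.range m, (g s * K s ^ (e k)) / ((e k)! : ℝ)) := by
        funext s
        simp [Finset.sum_apply]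
      rwa [h2] at this
    rw [hfun]
    rw [integral_add hsumint ((hiint a t (e m)).const_mul _)]
    rw [integral_finset_sum (fun k _ => (hiint a t (e k)).div_const _)]
    rw [intervalIntegral.integral_const_mul]
    congr 1
    exact Finset.sum_congr rfl (fun k _ => by rw [intervalIntegral.integral_div])
  have hsb : ∀ j : ℕ, (∫ s in a..t, g s * K s ^ j) ≤ K t ^ (j+1) / ((j:ℝ)+1) :=
    fun j => simplex_bound g hg hg0 a t ht.1 j
  have hterm : ∀ j : ℕ, (∫ s in a..t, g s * K s ^ j) / ((j)! : ℝ) ≤ K t ^ (j+1) / (j+1)! := by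
    intro j
    calc (∫ s in a..t, g s * K s ^ j) / ((j)! : ℝ)
        ≤ (K t ^ (j+1) / ((j:ℝ)+1)) / ((j)! : ℝ) := by
          gcongr
          exact hsb j
      _ = K t ^ (j+1) / (j+1)! := by
          rw [hfact j, div_div]
  calc (∫ s in a..t, g s * w s)
      ≤ ∫ s in a..t, g s * R s := hstep1
    _ = (∑ k ∈ Finset.range m, (∫ s in a..t, g s * K s ^ (e k)) / ((e k)! : ℝ))
        + (c / (e m)!) * (∫ s in a..t, g s * K s ^ (e m)) := hsplit
    _ ≤ (∑ k ∈ Finset.range m, K t ^ (e k + 1) / (e k + 1)!)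
        + (c / (e m)!) * (K t ^ (e m + 1) / ((e m : ℝ)+1)) := by
        apply _root_.add_le_add
        · exact Finset.sum_le_sum (fun k _ => hterm (e k))
        · exact mul_le_mul_of_nonneg_left (hsb (e m)) (by positivity)
    _ = (∑ k ∈ Finset.range m, K t ^ (e k + 1) / (e k + 1)!)
        + c * K t ^ (e m + 1) / (e m + 1)! := by
        congr 1
        rw [hfact (e m), _root_.div_mul_div_comm]
        ring

/-- Grönwall-type lemma with `cosh` bound for the coupled Volterra system. -/
lemma gronwall_cosh (g : ℝ → ℝ) (hg : Integrable g) (hg0 : ∀ t, 0 ≤ g t)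
    (a b : ℝ) (hab : a ≤ b) (u v : ℝ → ℝ) (hu_c : Continuous u) (hv_c : Continuous v)
    (hu : ∀ t ∈ Icc a b, u t ≤ 1 + ∫ s in a..t, g s * v s)
    (hv : ∀ t ∈ Icc a b, v t ≤ ∫ s in a..t, g s * u s) :
    (∫ s in a..b, g s * v s) ≤ Real.cosh (∫ s in a..b, g s) - 1 := by
  set K : ℝ → ℝ := fun s => ∫ x in a..s, g x with hKdef
  set κ : ℝ := K b with hκdef
  have hκ0 : 0 ≤ κ := by
    simpa [hκdef, hKdef] using integral_nonneg hab (fun s _ => hg0 s)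
  obtain ⟨C, hC⟩ := isCompact_Icc.exists_bound_of_continuousOn hu_c.continuousOn
  have hC0 : 0 ≤ C := le_trans (norm_nonneg _) (hC a (left_mem_Icc.mpr hab))
  set P : ℕ → ℝ → ℝ := fun n t =>
    (∑ k ∈ Finset.range n, K t ^ (2*k) / (2*k)!) + C * K t ^ (2*n) / (2*n)! with hPdef
  set Q : ℕ → ℝ → ℝ := fun n t =>
    (∑ k ∈ Finset.range n, K t ^ (2*k+1) / (2*k+1)!) + C * K t ^ (2*n+1) / (2*n+1)! with hQdef
  have hPQ : ∀ n, (∀ t ∈ Icc a b, u t ≤ P n t) → (∀ t ∈ Icc a b, v t ≤ Q n t) := by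
    intro n hP t ht
    have he := engine g hg hg0 a b u hu_c n C hC0 (fun k => 2*k) hP t ht
    calc v t ≤ ∫ s in a..t, g s * u s := hv t ht
      _ ≤ Q n t := he
  have hQP : ∀ n, (∀ t ∈ Icc a b, v t ≤ Q n t) → (∀ t ∈ Icc a b, u t ≤ P (n+1) t) := by
    intro n hQ t ht
    have he := engine g hg hg0 a b v hv_c n C hC0 (fun k => 2*k+1) hQ t ht
    have hre : P (n+1) t = 1 + ((∑ k ∈ Finset.range n, K t ^ (2*k+1+1) / (2*k+1+1)!)
        + C * K t ^ (2*n+1+1) / (2*n+1+1)!) := by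
      rw [hPdef]
      simp only
      rw [Finset.sum_range_succ']
      have h1 : ∀ k : ℕ, K t ^ (2*(k+1)) / ((2*(k+1))! : ℝ) = K t ^ (2*k+1+1) / (2*k+1+1)! := by
        intro k
        congr 2 <;> omega
      have h2 : K t ^ (2*0) / ((2*0)! : ℝ) = 1 := by norm_num
      have h3 : (2*(n+1)) = 2*n+1+1 := by omega
      rw [Finset.sum_congr rfl (fun k _ => h1 k), h2, h3]
      ring
    calc u t ≤ 1 + ∫ s in a..t, g s * v s := hu t ht
      _ ≤ 1 + ((∑ k ∈ Finset.range n, K t ^ (2*k+1+1) / (2*k+1+1)!)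
            + C * K t ^ (2*n+1+1) / (2*n+1+1)!) := by linarith [he]
      _ = P (n+1) t := hre.symm
  have hbase : ∀ t ∈ Icc a b, u t ≤ P 0 t := by
    intro t ht
    have : u t ≤ C := le_trans (le_trans (le_abs_self _) (le_of_eq (Real.norm_eq_abs _).symm))
      (hC t ht)
    calc u t ≤ C := this
      _ = P 0 t := by simp [hPdef]
  have hPn : ∀ n, ∀ t ∈ Icc a b, u t ≤ P n t := by
    intro n
    induction n with
    | zero => exact hbase
    | succ n ih => exact hQP n (hPQ n ih)
  have hbound : ∀ n, (∫ s in a..b, g s * v s)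
      ≤ (∑ k ∈ Finset.range n, κ ^ (2*k+1+1) / (2*k+1+1)!) + C * κ ^ (2*n+1+1) / (2*n+1+1)! :=
    fun n => engine g hg hg0 a b v hv_c n C hC0 (fun k => 2*k+1) (hPQ n (hPn n))
      b (right_mem_Icc.mpr hab)
  have hcosh : ∀ n, (∑ k ∈ Finset.range n, κ ^ (2*k+1+1) / ((2*k+1+1)! : ℝ))
      ≤ Real.cosh κ - 1 := by
    intro n
    have hsum : (∑ k ∈ Finset.range (n+1), κ ^ (2*k) / ((2*k)! : ℝ)) ≤ Real.cosh κ :=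
      sum_le_hasSum (Finset.range (n+1))
        (fun i _ => div_nonneg (pow_nonneg hκ0 _) (by positivity)) (Real.hasSum_cosh κ)
    rw [Finset.sum_range_succ'] at hsum
    have h1 : ∀ k : ℕ, κ ^ (2*(k+1)) / ((2*(k+1))! : ℝ) = κ ^ (2*k+1+1) / (2*k+1+1)! := by
      intro k
      congr 2 <;> omega
    have h2 : κ ^ (2*0) / ((2*0)! : ℝ) = 1 := by norm_num
    rw [Finset.sum_congr rfl (fun k _ => h1 k), h2] at hsum
    linarith
  have htail : Filter.Tendsto (fun n : ℕ => C * κ ^ (2*n+1+1) / (2*n+1+1)!)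
      Filter.atTop (nhds 0) := by
    have h1 : Filter.Tendsto (fun m : ℕ => κ ^ m / (m)! : ℕ → ℝ) Filter.atTop (nhds 0) :=
      FloorSemiring.tendsto_pow_div_factorial_atTop κ
    have hle : ∀ n : ℕ, n ≤ 2*n+1+1 := fun n => by omega
    have h2 : Filter.Tendsto (fun n : ℕ => 2*n+1+1) Filter.atTop Filter.atTop :=
      Filter.tendsto_atTop_mono hle Filter.tendsto_id
    have h3 := (h1.comp h2).const_mul C
    simpa [Function.comp, mul_div_assoc] using h3
  have htend : Filter.Tendsto
      (fun n : ℕ => (Real.cosh κ - 1) + C * κ ^ (2*n+1+1) / (2*n+1+1)!)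
      Filter.atTop (nhds (Real.cosh κ - 1 + 0)) :=
    Filter.Tendsto.const_add _ htail
  have hfin : (∫ s in a..b, g s * v s) ≤ Real.cosh κ - 1 + 0 := by
    refine ge_of_tendsto htend ?_
    filter_upwards with n
    calc (∫ s in a..b, g s * v s)
        ≤ (∑ k ∈ Finset.range n, κ ^ (2*k+1+1) / (2*k+1+1)!) + C * κ ^ (2*n+1+1) / (2*n+1+1)! :=
          hbound n
      _ ≤ (Real.cosh κ - 1) + C * κ ^ (2*n+1+1) / (2*n+1+1)! := by
          have := hcosh n
          linarith
  simpa using hfin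

end ZSHelpers

open MeasureTheory Complex Set

/-- For `q ∈ L¹` supported in `Ω = [-T₋,T₊]`, the Zakharov–Shabat
coefficient `a(ζ)` (from the Jost solution `φ = (A e^{-iζt}, B e^{iζt})` with
`A(-T₋)=1`, `B(-T₋)=0`, `a(ζ) = A(T₊)`) is such that
`atilde(ζ) = [a(ζ)-1] e^{-2iζT₊}` satisfies `|atilde(ζ)| ≤ [cosh(κ)-1] e^{2T₊ Im ζ}` for
`Im ζ ≥ 0` and `|atilde(ζ)| ≤ [cosh(κ)-1] e^{-2T₋ Im ζ}` for `Im ζ < 0`,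
where `κ = ‖q‖_{L¹(Ω)}`. -/
theorem a_coefficient_exponential_bound
    (Tm Tp : ℝ) (hTm : 0 ≤ Tm) (hTp : 0 ≤ Tp)
    (q : ℝ → ℂ) (hq : Integrable q)
    (hsupp : Function.support q ⊆ Icc (-Tm) Tp)
    (r : ℝ → ℂ) (hr : ∀ t, r t = -(starRingEnd ℂ) (q t))
    (ζ : ℂ)
    (A B : ℝ → ℂ)
    (hA : ∀ t, HasDerivAt A (q t * B t * Complex.exp (2 * Complex.I * ζ * t)) t)
    (hB : ∀ t, HasDerivAt B (r t * A t * Complex.exp (-(2 * Complex.I * ζ * t))) t)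
    (hA0 : A (-Tm) = 1) (hB0 : B (-Tm) = 0)
    (a atilde : ℂ) (ha : a = A Tp)
    (hatilde : atilde = (a - 1) * Complex.exp (-(2 * Complex.I * ζ * Tp)))
    (κ : ℝ) (hκ : κ = ∫ t in Icc (-Tm) Tp, ‖q t‖) :
    (0 ≤ ζ.im → ‖atilde‖ ≤ (Real.cosh κ - 1) * Real.exp (2 * Tp * ζ.im))
    ∧ (ζ.im < 0 → ‖atilde‖ ≤ (Real.cosh κ - 1) * Real.exp (-(2 * Tm * ζ.im))) := by
  have hab : -Tm ≤ Tp := by linarith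
  set g : ℝ → ℝ := fun s => ‖q s‖ with hgdef
  have hg : Integrable g := hq.norm
  have hg0 : ∀ t, 0 ≤ g t := fun t => norm_nonneg _
  have contA : Continuous A := continuous_iff_continuousAt.mpr (fun t => (hA t).continuousAt)
  have contB : Continuous B := continuous_iff_continuousAt.mpr (fun t => (hB t).continuousAt)
  have contE1 : Continuous fun s : ℝ => Complex.exp (2 * Complex.I * ζ * s) := by
    fun_prop
  have contE2 : Continuous fun s : ℝ => Complex.exp (-(2 * Complex.I * ζ * s)) := by
    fun_prop
  -- integral equations
  have hAeq : ∀ t, A t - 1 = ∫ s in (-Tm)..t, q s * B s * Complex.exp (2 * Complex.I * ζ * s) := by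
    intro t
    have hint : IntervalIntegrable
        (fun s : ℝ => q s * B s * Complex.exp (2 * Complex.I * ζ * s)) volume (-Tm) t := by
      have h1 : IntervalIntegrable
          (fun s : ℝ => q s * (B s * Complex.exp (2 * Complex.I * ζ * s))) volume (-Tm) t :=
        (hq.intervalIntegrable).mul_continuousOn ((contB.mul contE1).continuousOn)
      simpa [mul_assoc] using h1
    have := intervalIntegral.integral_eq_sub_of_hasDerivAt
      (f := A) (fun s _ => hA s) hint
    rw [this, hA0]
  have hrint : Integrable r := by
    have hmeas : AEStronglyMeasurable r volume := by
      have : AEStronglyMeasurable (fun t => -(starRingEnd ℂ) (q t)) volume :=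
        (Complex.continuous_conj.comp_aestronglyMeasurable hq.aestronglyMeasurable).neg
      exact this.congr (Filter.Eventually.of_forall (fun t => (hr t).symm))
    refine Integrable.mono' hq.norm hmeas ?_
    filter_upwards with t
    rw [hr t]
    simp [RCLike.norm_conj]
  have hBeq : ∀ t, B t = ∫ s in (-Tm)..t, r s * A s * Complex.exp (-(2 * Complex.I * ζ * s)) := by
    intro t
    have hint : IntervalIntegrable
        (fun s : ℝ => r s * A s * Complex.exp (-(2 * Complex.I * ζ * s))) volume (-Tm) t := by
      have h1 : IntervalIntegrable
          (fun s : ℝ => r s * (A s * Complex.exp (-(2 * Complex.I * ζ * s)))) volume (-Tm) t :=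
        (hrint.intervalIntegrable).mul_continuousOn ((contA.mul contE2).continuousOn)
      simpa [mul_assoc] using h1
    have := intervalIntegral.integral_eq_sub_of_hasDerivAt
      (f := B) (fun s _ => hB s) hint
    rw [this, hB0, sub_zero]
  -- norm identities for the integrands
  have hnr : ∀ s, ‖r s‖ = g s := by
    intro s
    rw [hr s, norm_neg]
    exact RCLike.norm_conj _
  have hre1 : ∀ s : ℝ, (2 * Complex.I * ζ * (s:ℂ)).re = -2 * ζ.im * s := by
    intro s
    simp [Complex.mul_re, Complex.mul_im]
  have hre2 : ∀ s : ℝ, (-(2 * Complex.I * ζ * (s:ℂ))).re = 2 * ζ.im * s := by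
    intro s
    rw [Complex.neg_re, hre1 s]
    ring
  have hnF1 : ∀ s : ℝ, ‖q s * B s * Complex.exp (2 * Complex.I * ζ * s)‖
      = g s * (‖B s‖ * Real.exp (-2 * ζ.im * s)) := by
    intro s
    rw [norm_mul, norm_mul, Complex.norm_exp, hre1 s]
    ring
  have hnF2 : ∀ s : ℝ, ‖r s * A s * Complex.exp (-(2 * Complex.I * ζ * s))‖
      = g s * (‖A s‖ * Real.exp (2 * ζ.im * s)) := by
    intro s
    rw [norm_mul, norm_mul, Complex.norm_exp, hre2 s, hnr s]
    ring
  have hnA : ∀ t, -Tm ≤ t →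
      ‖A t - 1‖ ≤ ∫ s in (-Tm)..t, g s * (‖B s‖ * Real.exp (-2 * ζ.im * s)) := by
    intro t ht
    rw [hAeq t]
    refine le_trans (intervalIntegral.norm_integral_le_integral_norm ht) ?_
    simp only [hnF1]
    exact le_refl _
  have hnB : ∀ t, -Tm ≤ t →
      ‖B t‖ ≤ ∫ s in (-Tm)..t, g s * (‖A s‖ * Real.exp (2 * ζ.im * s)) := by
    intro t ht
    rw [hBeq t]
    refine le_trans (intervalIntegral.norm_integral_le_integral_norm ht) ?_
    simp only [hnF2]
    exact le_refl _
  have hκeq : κ = ∫ s in (-Tm)..Tp, g s := by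
    rw [hκ, intervalIntegral.integral_of_le hab, MeasureTheory.integral_Icc_eq_integral_Ioc]
  have hatn : ‖atilde‖ = ‖a - 1‖ * Real.exp (2 * ζ.im * Tp) := by
    rw [hatilde, norm_mul]
    congr 1
    rw [Complex.norm_exp, hre2 Tp]
  constructor
  · -- case Im ζ ≥ 0
    intro hy
    set u : ℝ → ℝ := fun t => ‖A t‖ with hudef
    set v : ℝ → ℝ := fun t => ‖B t‖ * Real.exp (-2 * ζ.im * t) with hvdef
    have cu : Continuous u := contA.norm
    have cv : Continuous v := (contB.norm).mul (by fun_prop)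
    have hu : ∀ t ∈ Icc (-Tm) Tp, u t ≤ 1 + ∫ s in (-Tm)..t, g s * v s := by
      intro t ht
      have h1 : u t ≤ ‖A t - 1‖ + 1 := by
        calc u t = ‖(A t - 1) + 1‖ := by rw [sub_add_cancel]
          _ ≤ ‖A t - 1‖ + ‖(1:ℂ)‖ := norm_add_le _ _
          _ = ‖A t - 1‖ + 1 := by norm_num
      have h2 := hnA t ht.1
      have h3 : (∫ s in (-Tm)..t, g s * (‖B s‖ * Real.exp (-2 * ζ.im * s)))
          = ∫ s in (-Tm)..t, g s * v s := rfl
      linarith [h2, h3 ▸ h2]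
    have hv : ∀ t ∈ Icc (-Tm) Tp, v t ≤ ∫ s in (-Tm)..t, g s * u s := by
      intro t ht
      have h1 : v t ≤ (∫ s in (-Tm)..t, g s * (‖A s‖ * Real.exp (2 * ζ.im * s)))
          * Real.exp (-2 * ζ.im * t) :=
        mul_le_mul_of_nonneg_right (hnB t ht.1) (Real.exp_nonneg _)
      have h2 : (∫ s in (-Tm)..t, g s * (‖A s‖ * Real.exp (2 * ζ.im * s)))
          * Real.exp (-2 * ζ.im * t)
          = ∫ s in (-Tm)..t, g s * (‖A s‖ * Real.exp (2 * ζ.im * s))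
              * Real.exp (-2 * ζ.im * t) := by
        rw [intervalIntegral.integral_mul_const]
      have h3 : (∫ s in (-Tm)..t, g s * (‖A s‖ * Real.exp (2 * ζ.im * s))
              * Real.exp (-2 * ζ.im * t))
          ≤ ∫ s in (-Tm)..t, g s * u s := by
        apply intervalIntegral.integral_mono_on ht.1
        · exact (hg.intervalIntegrable.mul_continuousOn
            ((contA.norm.mul (by fun_prop)).continuousOn)).mul_const _
        · exact hg.intervalIntegrable.mul_continuousOn (contA.norm.continuousOn)
        intro s hs
        have hee : Real.exp (2 * ζ.im * s) * Real.exp (-2 * ζ.im * t) ≤ 1 := by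
          rw [← Real.exp_add]
          rw [Real.exp_le_one_iff]
          nlinarith [hs.2]
        have he1 : 0 ≤ Real.exp (2 * ζ.im * s) := Real.exp_nonneg _
        have he2 : 0 ≤ Real.exp (-2 * ζ.im * t) := Real.exp_nonneg _
        have hga : 0 ≤ g s * ‖A s‖ := mul_nonneg (hg0 s) (norm_nonneg _)
        nlinarith [hga, hee]
      calc v t ≤ _ := h1
        _ = _ := h2
        _ ≤ _ := h3
    have hG := gronwall_cosh g hg hg0 (-Tm) Tp hab u v cu cv hu hv
    rw [← hκeq] at hG
    have hA1 : ‖a - 1‖ ≤ ∫ s in (-Tm)..Tp, g s * v s := by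
      rw [ha]
      exact hnA Tp hab
    rw [hatn]
    have : ‖a - 1‖ * Real.exp (2 * ζ.im * Tp) ≤ (Real.cosh κ - 1) * Real.exp (2 * ζ.im * Tp) :=
      mul_le_mul_of_nonneg_right (hA1.trans hG) (Real.exp_nonneg _)
    calc ‖a - 1‖ * Real.exp (2 * ζ.im * Tp) ≤ (Real.cosh κ - 1) * Real.exp (2 * ζ.im * Tp) := this
      _ = (Real.cosh κ - 1) * Real.exp (2 * Tp * ζ.im) := by ring_nf
  · -- case Im ζ < 0
    intro hy
    set u : ℝ → ℝ := fun t => ‖A t‖ * Real.exp (2 * ζ.im * (t + Tm)) with hudef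
    set v : ℝ → ℝ := fun t => ‖B t‖ * Real.exp (2 * ζ.im * Tm) with hvdef
    have cu : Continuous u := (contA.norm).mul (by fun_prop)
    have cv : Continuous v := (contB.norm).mul continuous_const
    have hu : ∀ t ∈ Icc (-Tm) Tp, u t ≤ 1 + ∫ s in (-Tm)..t, g s * v s := by
      intro t ht
      have hE0 : 0 ≤ Real.exp (2 * ζ.im * (t + Tm)) := Real.exp_nonneg _
      have hE1 : Real.exp (2 * ζ.im * (t + Tm)) ≤ 1 := by
        rw [Real.exp_le_one_iff]
        nlinarith [ht.1]
      have h1 : ‖A t‖ ≤ 1 + ∫ s in (-Tm)..t, g s * (‖B s‖ * Real.exp (-2 * ζ.im * s)) := by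
        have h1a : ‖A t‖ ≤ ‖A t - 1‖ + 1 := by
          calc ‖A t‖ = ‖(A t - 1) + 1‖ := by rw [sub_add_cancel]
            _ ≤ ‖A t - 1‖ + ‖(1:ℂ)‖ := norm_add_le _ _
            _ = ‖A t - 1‖ + 1 := by norm_num
        linarith [hnA t ht.1]
      have h2 : u t ≤ (1 + ∫ s in (-Tm)..t, g s * (‖B s‖ * Real.exp (-2 * ζ.im * s)))
          * Real.exp (2 * ζ.im * (t + Tm)) :=
        mul_le_mul_of_nonneg_right h1 hE0
      have h3 : (1 + ∫ s in (-Tm)..t, g s * (‖B s‖ * Real.exp (-2 * ζ.im * s)))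
            * Real.exp (2 * ζ.im * (t + Tm))
          = Real.exp (2 * ζ.im * (t + Tm))
            + ∫ s in (-Tm)..t, g s * (‖B s‖ * Real.exp (-2 * ζ.im * s))
                * Real.exp (2 * ζ.im * (t + Tm)) := by
        rw [intervalIntegral.integral_mul_const]
        ring
      have h4 : (∫ s in (-Tm)..t, g s * (‖B s‖ * Real.exp (-2 * ζ.im * s))
              * Real.exp (2 * ζ.im * (t + Tm)))
          ≤ ∫ s in (-Tm)..t, g s * v s := by
        apply intervalIntegral.integral_mono_on ht.1
        · exact (hg.intervalIntegrable.mul_continuousOn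
            ((contB.norm.mul (by fun_prop)).continuousOn)).mul_const _
        · exact hg.intervalIntegrable.mul_continuousOn (cv.continuousOn)
        intro s hs
        have hee : Real.exp (-2 * ζ.im * s) * Real.exp (2 * ζ.im * (t + Tm))
            ≤ Real.exp (2 * ζ.im * Tm) := by
          rw [← Real.exp_add]
          apply Real.exp_le_exp.mpr
          nlinarith [hs.2]
        have hgB : 0 ≤ g s * ‖B s‖ := mul_nonneg (hg0 s) (norm_nonneg _)
        have he1 : 0 ≤ Real.exp (-2 * ζ.im * s) := Real.exp_nonneg _
        have he2 : 0 ≤ Real.exp (2 * ζ.im * (t + Tm)) := Real.exp_nonneg _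
        calc g s * (‖B s‖ * Real.exp (-2 * ζ.im * s)) * Real.exp (2 * ζ.im * (t + Tm))
            = (g s * ‖B s‖) * (Real.exp (-2 * ζ.im * s) * Real.exp (2 * ζ.im * (t + Tm))) := by
              ring
          _ ≤ (g s * ‖B s‖) * Real.exp (2 * ζ.im * Tm) := by
              exact mul_le_mul_of_nonneg_left hee hgB
          _ = g s * v s := by rw [hvdef]; ring
      calc u t ≤ _ := h2
        _ = _ := h3
        _ ≤ 1 + ∫ s in (-Tm)..t, g s * v s := by linarith [h4, hE1]
    have hv : ∀ t ∈ Icc (-Tm) Tp, v t ≤ ∫ s in (-Tm)..t, g s * u s := by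
      intro t ht
      have h1 : v t ≤ (∫ s in (-Tm)..t, g s * (‖A s‖ * Real.exp (2 * ζ.im * s)))
          * Real.exp (2 * ζ.im * Tm) :=
        mul_le_mul_of_nonneg_right (hnB t ht.1) (Real.exp_nonneg _)
      have h2 : (∫ s in (-Tm)..t, g s * (‖A s‖ * Real.exp (2 * ζ.im * s)))
            * Real.exp (2 * ζ.im * Tm)
          = ∫ s in (-Tm)..t, g s * (‖A s‖ * Real.exp (2 * ζ.im * s))
              * Real.exp (2 * ζ.im * Tm) := by
        rw [intervalIntegral.integral_mul_const]
      have h3 : ∀ s : ℝ, g s * (‖A s‖ * Real.exp (2 * ζ.im * s)) * Real.exp (2 * ζ.im * Tm)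
          = g s * u s := by
        intro s
        have he : Real.exp (2 * ζ.im * s) * Real.exp (2 * ζ.im * Tm)
            = Real.exp (2 * ζ.im * (s + Tm)) := by
          rw [← Real.exp_add]
          ring_nf
        calc g s * (‖A s‖ * Real.exp (2 * ζ.im * s)) * Real.exp (2 * ζ.im * Tm)
            = g s * (‖A s‖ * (Real.exp (2 * ζ.im * s) * Real.exp (2 * ζ.im * Tm))) := by ring
          _ = g s * u s := by rw [he]
      calc v t ≤ _ := h1
        _ = _ := h2
        _ = ∫ s in (-Tm)..t, g s * u s := by simp only [h3]
    have hG := gronwall_cosh g hg hg0 (-Tm) Tp hab u v cu cv hu hv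
    rw [← hκeq] at hG
    -- final assembly
    have hA1 : ‖a - 1‖ ≤ ∫ s in (-Tm)..Tp, g s * (‖B s‖ * Real.exp (-2 * ζ.im * s)) := by
      rw [ha]
      exact hnA Tp hab
    set D : ℝ := Real.exp (-2 * ζ.im * Tm) * Real.exp (-2 * ζ.im * Tp) with hDdef
    have hD0 : 0 ≤ D := mul_nonneg (Real.exp_nonneg _) (Real.exp_nonneg _)
    have h5 : (∫ s in (-Tm)..Tp, g s * (‖B s‖ * Real.exp (-2 * ζ.im * s)))
        ≤ ∫ s in (-Tm)..Tp, (g s * v s) * D := by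
      apply intervalIntegral.integral_mono_on hab
      · exact hg.intervalIntegrable.mul_continuousOn
          ((contB.norm.mul (by fun_prop)).continuousOn)
      · exact (hg.intervalIntegrable.mul_continuousOn (cv.continuousOn)).mul_const _
      intro s hs
      have hgB : 0 ≤ g s * ‖B s‖ := mul_nonneg (hg0 s) (norm_nonneg _)
      have hee : Real.exp (-2 * ζ.im * s)
          ≤ Real.exp (2 * ζ.im * Tm) * D := by
        rw [hDdef, ← Real.exp_add, ← Real.exp_add]
        apply Real.exp_le_exp.mpr
        nlinarith [hs.2]
      calc g s * (‖B s‖ * Real.exp (-2 * ζ.im * s))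
          = (g s * ‖B s‖) * Real.exp (-2 * ζ.im * s) := by ring
        _ ≤ (g s * ‖B s‖) * (Real.exp (2 * ζ.im * Tm) * D) := by
            exact mul_le_mul_of_nonneg_left hee hgB
        _ = (g s * v s) * D := by rw [hvdef]; ring
    have h6 : (∫ s in (-Tm)..Tp, (g s * v s) * D) = (∫ s in (-Tm)..Tp, g s * v s) * D := by
      rw [intervalIntegral.integral_mul_const]
    have h7 : ‖a - 1‖ ≤ (Real.cosh κ - 1) * D := by
      calc ‖a - 1‖ ≤ _ := hA1
        _ ≤ _ := h5
        _ = (∫ s in (-Tm)..Tp, g s * v s) * D := h6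
        _ ≤ (Real.cosh κ - 1) * D := mul_le_mul_of_nonneg_right hG hD0
    rw [hatn]
    calc ‖a - 1‖ * Real.exp (2 * ζ.im * Tp)
        ≤ ((Real.cosh κ - 1) * D) * Real.exp (2 * ζ.im * Tp) :=
          mul_le_mul_of_nonneg_right h7 (Real.exp_nonneg _)
      _ = (Real.cosh κ - 1) * Real.exp (-(2 * Tm * ζ.im)) := by
          have hDe : D * Real.exp (2 * ζ.im * Tp) = Real.exp (-(2 * Tm * ζ.im)) := by
            rw [hDdef, ← Real.exp_add, ← Real.exp_add]
            congr 1
            ring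
          rw [mul_assoc, hDe]
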